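/- Let Y and W be pointed metric spaces and T : Y → W Lipschitz with T(0) = 0. Then T is MS-Lipschitz p-summing if and only if the Lipschitz adjoint T^# : W^# → Y^#, defined by T^#(f) = f ∘ T, is (Cohen) strongly p*-summing, where 1/p + 1/p* = 1. -/

import Mathlib

open scoped TensorProduct
open NormedSpace Finset

noncomputable section

/-- The strong `ℓ_p^m` norm of a finite family in a normed space. -/
def strongLp {E : Type*} [NormedAddCommGroup E] (p : ℝ) {m : ℕ} (x : Fin m → E) : ℝ :=
  (∑ j, ‖x j‖ ^ p) ^ (1 / p)

/-- The weak `ℓ_p^{m,w}` norm of a finite family in a normed space. -/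
def weakLp {E : Type*} [NormedAddCommGroup E] [NormedSpace ℝ E] (p : ℝ) {m : ℕ}
    (x : Fin m → E) : ℝ :=
  sSup {r : ℝ | ∃ φ : StrongDual ℝ E, ‖φ‖ ≤ 1 ∧ r = (∑ j, |φ (x j)| ^ p) ^ (1 / p)}

/-- A continuous linear operator is `p`-summing. -/
def IsPSumming {E F : Type*} [NormedAddCommGroup E] [NormedSpace ℝ E]
    [NormedAddCommGroup F] [NormedSpace ℝ F] (p : ℝ) (u : E →L[ℝ] F) : Prop :=
  ∃ K > 0, ∀ (m : ℕ) (x : Fin m → E),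
    strongLp p (fun j => u (x j)) ≤ K * weakLp p x

/-- A continuous linear operator is (Cohen) strongly `p`-summing (`q` is the conjugate of `p`). -/
def IsStronglyPSumming {E F : Type*} [NormedAddCommGroup E] [NormedSpace ℝ E]
    [NormedAddCommGroup F] [NormedSpace ℝ F] (p q : ℝ) (u : E →L[ℝ] F) : Prop :=
  ∃ K > 0, ∀ (m : ℕ) (x : Fin m → E) (φ : Fin m → StrongDual ℝ F),
    ∑ j, |φ j (u (x j))| ≤ K * strongLp p x * weakLp q φ

/-- A continuous linear operator is (Cohen) `p`-nuclear (`q` is the conjugate of `p`). -/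
def IsPNuclear {E F : Type*} [NormedAddCommGroup E] [NormedSpace ℝ E]
    [NormedAddCommGroup F] [NormedSpace ℝ F] (p q : ℝ) (u : E →L[ℝ] F) : Prop :=
  ∃ K > 0, ∀ (m : ℕ) (x : Fin m → E) (φ : Fin m → StrongDual ℝ F),
    ∑ j, |φ j (u (x j))| ≤ K * weakLp p x * weakLp q φ

/-- The Chevet–Saphar norm `d_p` on a tensor product (`q` is the conjugate of `p`):
infimum over all finite representations of `z`. -/
def dpNorm {E G : Type*} [NormedAddCommGroup E] [NormedSpace ℝ E]
    [NormedAddCommGroup G] [NormedSpace ℝ G] (p q : ℝ) (z : TensorProduct ℝ E G) : ℝ :=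
  sInf {r : ℝ | ∃ (m : ℕ) (n : Fin m → E) (h : Fin m → G),
    z = ∑ j, n j ⊗ₜ[ℝ] h j ∧ r = weakLp p n * strongLp q h}

/-- The Chevet–Saphar norm `g_p` on a tensor product (`q` is the conjugate of `p`). -/
def gpNorm {E G : Type*} [NormedAddCommGroup E] [NormedSpace ℝ E]
    [NormedAddCommGroup G] [NormedSpace ℝ G] (p q : ℝ) (z : TensorProduct ℝ E G) : ℝ :=
  sInf {r : ℝ | ∃ (m : ℕ) (n : Fin m → E) (h : Fin m → G),
    z = ∑ j, n j ⊗ₜ[ℝ] h j ∧ r = strongLp p n * weakLp q h}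

/-- The tensor norm `w_p` (`q` is the conjugate of `p`). -/
def wpNorm {E G : Type*} [NormedAddCommGroup E] [NormedSpace ℝ E]
    [NormedAddCommGroup G] [NormedSpace ℝ G] (p q : ℝ) (z : TensorProduct ℝ E G) : ℝ :=
  sInf {r : ℝ | ∃ (m : ℕ) (n : Fin m → E) (h : Fin m → G),
    z = ∑ j, n j ⊗ₜ[ℝ] h j ∧ r = weakLp p n * weakLp q h}

/-- `E`, together with the map `δ : Y → E`, is (isometrically) the Lipschitz-free space
of the pointed metric space `(Y, y₀)`: `δ` sends the base point to `0`, is an isometric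
embedding, has dense linear span, and the norm of finite combinations of point evaluations
is computed against the unit ball of `Lip₀(Y)`. -/
structure IsFreeSpace (Y : Type*) [MetricSpace Y] (y₀ : Y)
    (E : Type*) [NormedAddCommGroup E] [NormedSpace ℝ E] [CompleteSpace E]
    (δ : Y → E) : Prop where
  map_base : δ y₀ = 0
  isometry : ∀ x y : Y, ‖δ x - δ y‖ = dist x y
  dense_span : (Submodule.span ℝ (Set.range δ)).topologicalClosure = ⊤
  norm_eq : ∀ (n : ℕ) (a : Fin n → ℝ) (x : Fin n → Y),
    ‖∑ i, a i • δ (x i)‖ =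
      sSup {r : ℝ | ∃ s : Y → ℝ, LipschitzWith 1 s ∧ s y₀ = 0 ∧ r = |∑ i, a i * s (x i)|}

end

noncomputable section

variable {Y W FY FW : Type*} [MetricSpace Y] [MetricSpace W]
  [NormedAddCommGroup FY] [NormedSpace ℝ FY] [NormedAddCommGroup FW] [NormedSpace ℝ FW]

/-- `T : Y → W` is MS-Lipschitz `p`-summing (`q` is the conjugate of `p`), the free spaces
of `Y` and `W` being realized as `FY`, `FW` via `δY`, `δW`.  Elements of `W^# = F(W)^*` are
encoded as elements of `StrongDual ℝ FW`, and `d_p^L` is the Chevet–Saphar norm computed in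
`F(Y) ⊗ W^#`. -/
def MSLipPSumming (p q : ℝ) (δY : Y → FY) (δW : W → FW) (T : Y → W) : Prop :=
  ∃ K > 0, ∀ (k : ℕ) (x y : Fin k → Y) (f : Fin k → StrongDual ℝ FW),
    |∑ l, (f l (δW (T (x l))) - f l (δW (T (y l))))| ≤
      K * dpNorm p q (∑ l, (δY (x l) - δY (y l)) ⊗ₜ[ℝ] f l)

/-- `T : Y → W` is MS-strongly Lipschitz `p`-summing (`q` is the conjugate of `p`). -/
def MSStronglyLipPSumming (p q : ℝ) (δY : Y → FY) (δW : W → FW) (T : Y → W) : Prop :=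
  ∃ K > 0, ∀ (k : ℕ) (x y : Fin k → Y) (f : Fin k → StrongDual ℝ FW),
    |∑ l, (f l (δW (T (x l))) - f l (δW (T (y l))))| ≤
      K * gpNorm p q (∑ l, (δY (x l) - δY (y l)) ⊗ₜ[ℝ] f l)

/-- `T : Y → W` is MS-Lipschitz `p`-nuclear (`q` is the conjugate of `p`). -/
def MSLipPNuclear (p q : ℝ) (δY : Y → FY) (δW : W → FW) (T : Y → W) : Prop :=
  ∃ K > 0, ∀ (k : ℕ) (x y : Fin k → Y) (f : Fin k → StrongDual ℝ FW),
    |∑ l, (f l (δW (T (x l))) - f l (δW (T (y l))))| ≤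
      K * wpNorm p q (∑ l, (δY (x l) - δY (y l)) ⊗ₜ[ℝ] f l)

end

noncomputable section AuxLemmas

open Real Finset

variable {E : Type*} [NormedAddCommGroup E] [NormedSpace ℝ E] {m : ℕ} {p q : ℝ}

lemma strongLp_nonneg (p : ℝ) (x : Fin m → E) : 0 ≤ strongLp p x :=
  Real.rpow_nonneg (Finset.sum_nonneg fun j _ => Real.rpow_nonneg (norm_nonneg _) _) _

lemma weakLp_set_nonempty (p : ℝ) (x : Fin m → E) :
    {r : ℝ | ∃ φ : StrongDual ℝ E, ‖φ‖ ≤ 1 ∧ r = (∑ j, |φ (x j)| ^ p) ^ (1 / p)}.Nonempty :=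
  ⟨_, 0, by simp, rfl⟩

lemma weakLp_bddAbove (hp : 0 ≤ p) (x : Fin m → E) :
    BddAbove {r : ℝ | ∃ φ : StrongDual ℝ E, ‖φ‖ ≤ 1 ∧ r = (∑ j, |φ (x j)| ^ p) ^ (1 / p)} := by
  refine ⟨(∑ j, ‖x j‖ ^ p) ^ (1 / p), ?_⟩
  rintro r ⟨φ, hφ, rfl⟩
  have h1 : ∀ j, |φ (x j)| ^ p ≤ ‖x j‖ ^ p := by
    intro j
    refine Real.rpow_le_rpow (abs_nonneg _) ?_ hp
    calc |φ (x j)| = ‖φ (x j)‖ := (Real.norm_eq_abs _).symm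
    _ ≤ ‖φ‖ * ‖x j‖ := φ.le_opNorm _
    _ ≤ 1 * ‖x j‖ := by gcongr
    _ = ‖x j‖ := one_mul _
  refine Real.rpow_le_rpow (Finset.sum_nonneg fun j _ => Real.rpow_nonneg (abs_nonneg _) _)
    (Finset.sum_le_sum fun j _ => h1 j) (by positivity)

lemma le_weakLp (hp : 0 ≤ p) (x : Fin m → E) (φ : StrongDual ℝ E) (hφ : ‖φ‖ ≤ 1) :
    (∑ j, |φ (x j)| ^ p) ^ (1 / p) ≤ weakLp p x :=
  le_csSup (weakLp_bddAbove hp x) ⟨φ, hφ, rfl⟩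

lemma weakLp_nonneg (hp : 0 ≤ p) (x : Fin m → E) : 0 ≤ weakLp p x := by
  refine le_trans ?_ (le_weakLp hp x 0 (by simp))
  positivity

lemma weakLp_le (x : Fin m → E) {B : ℝ}
    (h : ∀ φ : StrongDual ℝ E, ‖φ‖ ≤ 1 → (∑ j, |φ (x j)| ^ p) ^ (1 / p) ≤ B) :
    weakLp p x ≤ B := by
  refine csSup_le (weakLp_set_nonempty p x) ?_
  rintro r ⟨φ, hφ, rfl⟩
  exact h φ hφ

/-- Hölder with absolute values, in the `q`-then-`p` order. -/
lemma abs_inner_le (hpq : p.HolderConjugate q) (a c : Fin m → ℝ) :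
    |∑ j, a j * c j| ≤ (∑ j, |a j| ^ q) ^ (1 / q) * (∑ j, |c j| ^ p) ^ (1 / p) := by
  calc |∑ j, a j * c j| ≤ ∑ j, |a j * c j| := Finset.abs_sum_le_sum_abs _ _
  _ = ∑ j, |a j| * |c j| := by simp [abs_mul]
  _ ≤ (∑ j, |(|a j|)| ^ q) ^ (1 / q) * (∑ j, |(|c j|)| ^ p) ^ (1 / p) :=
    Real.inner_le_Lp_mul_Lq Finset.univ _ _ hpq.symm
  _ = (∑ j, |a j| ^ q) ^ (1 / q) * (∑ j, |c j| ^ p) ^ (1 / p) := by simp [abs_abs]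

lemma norm_combo_le_weakLp (hpq : p.HolderConjugate q) (b : Fin m → ℝ) (n : Fin m → E) :
    ‖∑ j, b j • n j‖ ≤ (∑ j, |b j| ^ q) ^ (1 / q) * weakLp p n := by
  by_cases hv : (∑ j, b j • n j) = 0
  · rw [hv, norm_zero]
    exact mul_nonneg (by positivity) (weakLp_nonneg hpq.nonneg n)
  · obtain ⟨g, hg1, hgv⟩ := exists_dual_vector ℝ _ (norm_ne_zero_iff.mpr hv)
    have h1 : ‖∑ j, b j • n j‖ = ∑ j, b j * g (n j) := by
      have hgv' : g (∑ j, b j • n j) = ‖∑ j, b j • n j‖ := by exact_mod_cast hgv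
      rw [← hgv', map_sum]; simp [smul_eq_mul]
    rw [h1]
    calc ∑ j, b j * g (n j) ≤ |∑ j, b j * g (n j)| := le_abs_self _
    _ ≤ (∑ j, |b j| ^ q) ^ (1 / q) * (∑ j, |g (n j)| ^ p) ^ (1 / p) := abs_inner_le hpq _ _
    _ ≤ (∑ j, |b j| ^ q) ^ (1 / q) * weakLp p n := by
        refine mul_le_mul_of_nonneg_left ?_ (by positivity)
        exact le_weakLp hpq.nonneg n g (le_of_eq hg1)

/-- The norming vector for the `ℓ_p` norm of a finite real vector. -/
lemma exists_norming (hpq : p.HolderConjugate q) (c : Fin m → ℝ) :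
    ∃ b : Fin m → ℝ, (∑ j, |b j| ^ q) ^ (1 / q) ≤ 1 ∧
      ∑ j, b j * c j = (∑ j, |c j| ^ p) ^ (1 / p) := by
  have hq0 : q ≠ 0 := hpq.symm.ne_zero
  have hp0 : p ≠ 0 := hpq.ne_zero
  set S := ∑ j, |c j| ^ p with hS
  have hS0 : 0 ≤ S := Finset.sum_nonneg fun j _ => Real.rpow_nonneg (abs_nonneg _) _
  rcases eq_or_lt_of_le hS0 with hS0' | hSpos
  · have hc : ∀ j, c j = 0 := by
      intro j
      have h2 := (Finset.sum_eq_zero_iff_of_nonneg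
        (fun j (_ : j ∈ Finset.univ) => Real.rpow_nonneg (abs_nonneg (c j)) p)).mp hS0'.symm
        j (Finset.mem_univ j)
      have h3 : |c j| = 0 := by
        by_contra h4
        have h5 : 0 < |c j| := lt_of_le_of_ne (abs_nonneg (c j)) (Ne.symm h4)
        exact absurd h2 (ne_of_gt (Real.rpow_pos_of_pos h5 p))
      simpa using h3
    refine ⟨0, ?_, ?_⟩
    · have : ∀ j ∈ Finset.univ, |(0 : Fin m → ℝ) j| ^ q = 0 := fun j _ => by
        simp [Real.zero_rpow hq0]
      rw [Finset.sum_congr rfl this, Finset.sum_const_zero,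
        Real.zero_rpow (one_div_ne_zero hq0)]
      exact zero_le_one
    · have hz : ∀ j ∈ Finset.univ, |c j| ^ p = 0 := fun j _ => by
        simp [hc j, Real.zero_rpow hp0]
      rw [← hS0', Real.zero_rpow (one_div_ne_zero hp0)]
      simp
  · -- main case
    set b : Fin m → ℝ := fun j =>
      (if c j < 0 then -(|c j| ^ (p - 1)) else |c j| ^ (p - 1)) / S ^ (1 / q) with hb
    have hSq : (0:ℝ) < S ^ (1 / q) := Real.rpow_pos_of_pos hSpos _
    have habs : ∀ j, |b j| = |c j| ^ (p - 1) / S ^ (1 / q) := by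
      intro j
      rw [hb]
      rcases lt_or_ge (c j) 0 with h | h
      · simp only [if_pos h]
        rw [abs_div, abs_neg, abs_of_nonneg (Real.rpow_nonneg (abs_nonneg _) _),
          abs_of_pos hSq]
      · simp only [if_neg (not_lt.mpr h)]
        rw [abs_div, abs_of_nonneg (Real.rpow_nonneg (abs_nonneg _) _), abs_of_pos hSq]
    have hbc : ∀ j, b j * c j = |c j| ^ p / S ^ (1 / q) := by
      intro j
      rw [hb]
      have hstep : |c j| ^ (p - 1) * |c j| = |c j| ^ p := by
        have := Real.rpow_add' (abs_nonneg (c j)) (show (p-1) + 1 ≠ 0 by simpa using hp0)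
        rw [show (p-1) + 1 = p by ring] at this
        rw [this, Real.rpow_one]
      rcases lt_or_ge (c j) 0 with h | h
      · simp only [if_pos h]
        rw [div_mul_eq_mul_div, neg_mul, ← hstep]
        rw [abs_of_neg h]; ring
      · simp only [if_neg (not_lt.mpr h)]
        rw [div_mul_eq_mul_div, ← hstep, abs_of_nonneg h]
    have hexp : 1 - 1 / q = 1 / p := by
      have := hpq.inv_add_inv_eq_one
      rw [one_div, one_div]; linarith
    have hsum : ∑ j, b j * c j = S ^ (1 / p) := by
      rw [Finset.sum_congr rfl fun j _ => hbc j, ← Finset.sum_div, ← hS]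
      rw [show S / S ^ (1 / q) = S ^ (1:ℝ) / S ^ (1 / q) by rw [Real.rpow_one],
        ← Real.rpow_sub hSpos, hexp]
    refine ⟨b, ?_, by rw [hsum]⟩
    -- ∑ |b j|^q = S / S = 1
    have hbq : ∀ j, |b j| ^ q = |c j| ^ p / S := by
      intro j
      have e1 : (|c j| ^ (p - 1)) ^ q = |c j| ^ p := by
        rw [← Real.rpow_mul (abs_nonneg _)]
        congr 1
        have := hpq.mul_eq_add
        ring_nf
        nlinarith [hpq.mul_eq_add]
      have e2 : (S ^ (1 / q)) ^ q = S := by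
        rw [← Real.rpow_mul (le_of_lt hSpos), one_div, inv_mul_cancel₀ hq0, Real.rpow_one]
      rw [habs j, Real.div_rpow (Real.rpow_nonneg (abs_nonneg _) _) (le_of_lt hSq), e1, e2]
    rw [Finset.sum_congr rfl fun j _ => hbq j, ← Finset.sum_div, ← hS, div_self (ne_of_gt hSpos),
      Real.one_rpow]

end AuxLemmas

noncomputable section AuxLemmas2

open Real Finset NormedSpace

variable {E : Type*} [NormedAddCommGroup E] [NormedSpace ℝ E] {m : ℕ} {p q : ℝ}

lemma weakLp_double_dual (hpq : p.HolderConjugate q) (n : Fin m → E) :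
    weakLp p (fun j => inclusionInDoubleDual ℝ E (n j)) ≤ weakLp p n := by
  refine weakLp_le _ (fun ψ hψ => ?_)
  have hcomp : ‖ψ.comp (inclusionInDoubleDual ℝ E)‖ ≤ 1 := by
    refine ContinuousLinearMap.opNorm_le_bound _ zero_le_one (fun v => ?_)
    calc ‖ψ ((inclusionInDoubleDual ℝ E) v)‖ ≤ ‖ψ‖ * ‖(inclusionInDoubleDual ℝ E) v‖ :=
      ψ.le_opNorm _
    _ ≤ 1 * ‖v‖ := mul_le_mul hψ (double_dual_bound ℝ E v) (by positivity) zero_le_one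
  exact le_weakLp hpq.nonneg n (ψ.comp (inclusionInDoubleDual ℝ E)) hcomp

lemma pi_sum_single {ι : Type*} [Fintype ι] [DecidableEq ι] {G : Type*} [AddCommMonoid G]
    (y : ι → G) : ∑ i, Pi.single i (y i) = y := by
  funext j
  rw [Finset.sum_apply]
  simp [Pi.single_apply]

/-- The continuous linear insertion of a coordinate. -/
def singleCLM (ι : Type*) [Fintype ι] [DecidableEq ι] (E : Type*) [NormedAddCommGroup E]
    [NormedSpace ℝ E] (i : ι) : E →L[ℝ] (ι → E) :=
  (LinearMap.single ℝ (fun _ : ι => E) i).mkContinuous 1 (fun v => by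
    rw [one_mul]
    refine (pi_norm_le_iff_of_nonneg (norm_nonneg v)).mpr (fun j => ?_)
    rcases eq_or_ne j i with rfl | h
    · show ‖(Pi.single j v : ι → E) j‖ ≤ ‖v‖; simp [LinearMap.single]
    · show ‖(Pi.single i v : ι → E) j‖ ≤ ‖v‖; simp [LinearMap.single, Pi.single_eq_of_ne h])

lemma singleCLM_apply {ι : Type*} [Fintype ι] [DecidableEq ι] {E : Type*} [NormedAddCommGroup E]
    [NormedSpace ℝ E] (i : ι) (v : E) : singleCLM ι E i v = Pi.single i v := rfl

lemma Nq_le_norm (hq : 0 < q) (c : Fin m → ℝ) :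
    (∑ j, |c j| ^ q) ^ (1 / q) ≤ (m : ℝ) ^ (1 / q) * ‖c‖ := by
  have h1 : ∑ j, |c j| ^ q ≤ (m : ℝ) * ‖c‖ ^ q := by
    calc ∑ j, |c j| ^ q ≤ ∑ _j : Fin m, ‖c‖ ^ q := by
          refine Finset.sum_le_sum fun j _ => Real.rpow_le_rpow (abs_nonneg _) ?_ hq.le
          rw [← Real.norm_eq_abs]; exact norm_le_pi_norm c j
    _ = (m : ℝ) * ‖c‖ ^ q := by rw [Finset.sum_const, card_univ, Fintype.card_fin,
          nsmul_eq_mul]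
  calc (∑ j, |c j| ^ q) ^ (1 / q) ≤ ((m : ℝ) * ‖c‖ ^ q) ^ (1 / q) :=
        Real.rpow_le_rpow (Finset.sum_nonneg fun j _ => Real.rpow_nonneg (abs_nonneg _) _)
          h1 (by positivity)
  _ = (m : ℝ) ^ (1 / q) * (‖c‖ ^ q) ^ (1 / q) :=
        Real.mul_rpow (Nat.cast_nonneg m) (Real.rpow_nonneg (norm_nonneg _) _)
  _ = (m : ℝ) ^ (1 / q) * ‖c‖ := by
        rw [← Real.rpow_mul (norm_nonneg _), mul_one_div, div_self hq.ne', Real.rpow_one]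

lemma exists_net (hq : 0 < q) {δ : ℝ} (hδ : 0 < δ) :
    ∃ N : Finset (Fin m → ℝ), (∀ b ∈ N, (∑ j, |b j| ^ q) ^ (1 / q) ≤ 1) ∧
      ∀ b : Fin m → ℝ, (∑ j, |b j| ^ q) ^ (1 / q) ≤ 1 →
        ∃ a ∈ N, (∑ j, |b j - a j| ^ q) ^ (1 / q) ≤ δ := by
  set Nq : (Fin m → ℝ) → ℝ := fun b => (∑ j, |b j| ^ q) ^ (1 / q) with hNqdef
  set Bq : Set (Fin m → ℝ) := {b | Nq b ≤ 1} with hBqdef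
  have hcont : Continuous Nq := by
    refine Continuous.rpow_const ?_ (fun _ => Or.inr (by positivity))
    exact continuous_finset_sum _ (fun j _ =>
      ((continuous_apply j).abs).rpow_const (fun _ => Or.inr hq.le))
  have hclosed : IsClosed Bq := isClosed_le hcont continuous_const
  have hsub : Bq ⊆ Metric.closedBall 0 1 := by
    intro b hb
    rw [Metric.mem_closedBall, dist_zero_right]
    refine (pi_norm_le_iff_of_nonneg zero_le_one).mpr (fun j => ?_)
    rw [Real.norm_eq_abs]
    by_contra habs
    push_neg at habs
    have h2 : (1:ℝ) < |b j| ^ q := (Real.one_lt_rpow_iff_of_pos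
      (lt_trans one_pos habs)).mpr (Or.inl ⟨habs, hq⟩)
    have h3 : |b j| ^ q ≤ ∑ j', |b j'| ^ q :=
      Finset.single_le_sum (f := fun j' => |b j'| ^ q)
        (fun j' _ => Real.rpow_nonneg (abs_nonneg _) _) (Finset.mem_univ j)
    have h4 : (1:ℝ) < ∑ j', |b j'| ^ q := lt_of_lt_of_le h2 h3
    have h5 : (1:ℝ) < Nq b := by
      rw [hNqdef]
      exact (Real.one_lt_rpow_iff_of_pos (lt_trans one_pos h4)).mpr
        (Or.inl ⟨h4, by positivity⟩)
    exact absurd hb (not_le.mpr h5)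
  have hcompact : IsCompact Bq :=
    Metric.isCompact_of_isClosed_isBounded hclosed
      (Metric.isBounded_closedBall.subset hsub)
  set D : ℝ := (m : ℝ) ^ (1 / q) + 1 with hD
  have hDpos : 0 < D := by positivity
  set δ' : ℝ := δ / D with hδ'
  have hδ'pos : 0 < δ' := div_pos hδ hDpos
  obtain ⟨s, hs⟩ := hcompact.elim_finite_subcover
    (fun b : Bq => Metric.ball (b : Fin m → ℝ) δ')
    (fun b => Metric.isOpen_ball)
    (fun b hb => Set.mem_iUnion.mpr ⟨⟨b, hb⟩, Metric.mem_ball_self hδ'pos⟩)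
  refine ⟨s.image (fun b : Bq => (b : Fin m → ℝ)), ?_, ?_⟩
  · intro b hb
    obtain ⟨b', _, rfl⟩ := Finset.mem_image.mp hb
    exact b'.2
  · intro b hb
    obtain ⟨i, hiu⟩ := Set.mem_iUnion.mp (hs hb)
    simp only [Set.mem_iUnion, exists_prop] at hiu
    obtain ⟨his, hbi⟩ := hiu
    refine ⟨(i : Fin m → ℝ), Finset.mem_image.mpr ⟨i, his, rfl⟩, ?_⟩
    have hdist : ‖b - (i : Fin m → ℝ)‖ < δ' := by
      rw [← dist_eq_norm]; exact hbi
    calc (∑ j, |b j - (i : Fin m → ℝ) j| ^ q) ^ (1 / q)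
        ≤ (m : ℝ) ^ (1 / q) * ‖b - (i : Fin m → ℝ)‖ := by
          have := Nq_le_norm hq (b - (i : Fin m → ℝ))
          simpa using this
    _ ≤ (m : ℝ) ^ (1 / q) * δ' := by
          refine mul_le_mul_of_nonneg_left hdist.le (by positivity)
    _ ≤ D * δ' := by
          refine mul_le_mul_of_nonneg_right ?_ hδ'pos.le
          rw [hD]; linarith
    _ = δ := by rw [hδ']; field_simp
end AuxLemmas2

noncomputable section DirA

open Real Finset NormedSpace

lemma dirA {Y W FY FW : Type*} [MetricSpace Y] [MetricSpace W]
    [NormedAddCommGroup FY] [NormedSpace ℝ FY]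
    [NormedAddCommGroup FW] [NormedSpace ℝ FW]
    {δY : Y → FY} {δW : W → FW}
    {p q : ℝ} (hpq : p.HolderConjugate q)
    (T : Y → W)
    (Ts : StrongDual ℝ FW →L[ℝ] StrongDual ℝ FY)
    (hTs : ∀ (f : StrongDual ℝ FW) (x : Y), Ts f (δY x) = f (δW (T x))) :
    IsStronglyPSumming q p Ts → MSLipPSumming p q δY δW T := by
  rintro ⟨K, hK, hks⟩
  refine ⟨K, hK, fun k x y f => ?_⟩
  set B2 : FY →ₗ[ℝ] (StrongDual ℝ FW) →ₗ[ℝ] ℝ := LinearMap.mk₂ ℝ (fun n g => Ts g n)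
    (fun n n' g => map_add (Ts g) n n') (fun c n g => by simp)
    (fun n g g' => by simp) (fun c n g => by simp) with hB2
  set L := TensorProduct.lift B2 with hL
  have hLtmul : ∀ (n : FY) (g : StrongDual ℝ FW), L (n ⊗ₜ[ℝ] g) = Ts g n := fun n g => rfl
  set z := ∑ l, (δY (x l) - δY (y l)) ⊗ₜ[ℝ] f l with hz
  have hLHS : ∑ l, (f l (δW (T (x l))) - f l (δW (T (y l)))) = L z := by
    rw [hz, map_sum]
    refine Finset.sum_congr rfl fun l _ => ?_
    rw [hLtmul, map_sub, hTs, hTs]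
  rw [hLHS]
  have hbound : ∀ r ∈ {r : ℝ | ∃ (m' : ℕ) (n : Fin m' → FY) (h : Fin m' → StrongDual ℝ FW),
      z = ∑ j, n j ⊗ₜ[ℝ] h j ∧ r = weakLp p n * strongLp q h}, |L z| ≤ K * r := by
    rintro r ⟨m', n, h, hzr, rfl⟩
    have h1 : L z = ∑ j, Ts (h j) (n j) := by
      rw [hzr, map_sum]
      exact Finset.sum_congr rfl fun j _ => hLtmul _ _
    have h2 : |L z| ≤ ∑ j, |(inclusionInDoubleDual ℝ FY (n j)) (Ts (h j))| := by
      rw [h1]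
      refine le_trans (Finset.abs_sum_le_sum_abs _ _) (le_of_eq ?_)
      exact Finset.sum_congr rfl fun j _ => by rw [dual_def]
    have h3 := hks m' h (fun j => inclusionInDoubleDual ℝ FY (n j))
    have h4 : K * strongLp q h * weakLp p (fun j => inclusionInDoubleDual ℝ FY (n j)) ≤
        K * strongLp q h * weakLp p n := by
      refine mul_le_mul_of_nonneg_left (weakLp_double_dual hpq n) ?_
      exact mul_nonneg hK.le (strongLp_nonneg q h)
    calc |L z| ≤ ∑ j, |(inclusionInDoubleDual ℝ FY (n j)) (Ts (h j))| := h2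
    _ ≤ K * strongLp q h * weakLp p (fun j => inclusionInDoubleDual ℝ FY (n j)) := h3
    _ ≤ K * strongLp q h * weakLp p n := h4
    _ = K * (weakLp p n * strongLp q h) := by ring
  have hne : Set.Nonempty {r : ℝ | ∃ (m' : ℕ) (n : Fin m' → FY) (h : Fin m' → StrongDual ℝ FW),
      z = ∑ j, n j ⊗ₜ[ℝ] h j ∧ r = weakLp p n * strongLp q h} :=
    ⟨weakLp p (fun l => δY (x l) - δY (y l)) * strongLp q f, k,
      (fun l => δY (x l) - δY (y l)), f, hz, rfl⟩
  have hinf : |L z| / K ≤ dpNorm p q z :=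
    le_csInf hne fun r hr => (div_le_iff₀ hK).mpr (by
      rw [mul_comm]; exact hbound r hr)
  rw [show K * dpNorm p q z = dpNorm p q z * K from mul_comm _ _, ← div_le_iff₀ hK]
  exact hinf

end DirA

noncomputable section StarB

open Real Finset NormedSpace

set_option maxHeartbeats 2000000 in
lemma starB {Y W FY FW : Type*} [MetricSpace Y] [Inhabited Y] [MetricSpace W] [Inhabited W]
    [NormedAddCommGroup FY] [NormedSpace ℝ FY] [CompleteSpace FY]
    [NormedAddCommGroup FW] [NormedSpace ℝ FW] [CompleteSpace FW]
    {δY : Y → FY} {δW : W → FW}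
    (hFY : IsFreeSpace Y default FY δY) (hFW : IsFreeSpace W default FW δW)
    {p q : ℝ} (hpq : p.HolderConjugate q)
    (T : Y → W) (hT0 : T default = default)
    (Ts : StrongDual ℝ FW →L[ℝ] StrongDual ℝ FY)
    (hTs : ∀ (f : StrongDual ℝ FW) (x : Y), Ts f (δY x) = f (δW (T x)))
    {K : ℝ} (hK : 0 < K)
    (hms : ∀ (k : ℕ) (x y : Fin k → Y) (f : Fin k → StrongDual ℝ FW),
      |∑ l, (f l (δW (T (x l))) - f l (δW (T (y l))))| ≤
        K * dpNorm p q (∑ l, (δY (x l) - δY (y l)) ⊗ₜ[ℝ] f l)) :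
    ∀ (m : ℕ) (n : Fin m → FY), (∀ j, n j ∈ Submodule.span ℝ (Set.range δY)) →
      ∀ (f : Fin m → StrongDual ℝ FW),
        |∑ j, Ts (f j) (n j)| ≤ K * (weakLp p n * strongLp q f) := by
  intro m n hn f
  classical
  have hrep : ∀ j, ∃ (kk : ℕ) (c : Fin kk → ℝ) (pt : Fin kk → Y),
      ∑ i, c i • δY (pt i) = n j := by
    intro j
    obtain ⟨kk, c, gg, hsum⟩ := Submodule.mem_span_set'.mp (hn j)
    choose pt hpt using fun i => (gg i).2
    exact ⟨kk, c, pt, by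
      rw [← hsum]
      exact Finset.sum_congr rfl fun i _ => by rw [hpt i]⟩
  choose kk cc pt hsum using hrep
  set k := Fintype.card (Σ j : Fin m, Fin (kk j)) with hk
  set e : Fin k ≃ (Σ j : Fin m, Fin (kk j)) := (Fintype.equivFin _).symm with he
  set xv : Fin k → Y := fun l => pt (e l).1 (e l).2 with hxv
  set yv : Fin k → Y := fun _ => (default : Y) with hyv
  set fv : Fin k → StrongDual ℝ FW := fun l => cc (e l).1 (e l).2 • f ((e l).1) with hfv
  have hA : ∑ l, (δY (xv l) - δY (yv l)) ⊗ₜ[ℝ] fv l = ∑ j, n j ⊗ₜ[ℝ] f j := by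
    have hbase : δY (default : Y) = 0 := hFY.map_base
    calc ∑ l, (δY (xv l) - δY (yv l)) ⊗ₜ[ℝ] fv l
        = ∑ l, δY (xv l) ⊗ₜ[ℝ] fv l := by
          refine Finset.sum_congr rfl fun l _ => ?_
          rw [show yv l = default from rfl, hbase, sub_zero]
    _ = ∑ s : (Σ j : Fin m, Fin (kk j)), δY (pt s.1 s.2) ⊗ₜ[ℝ] (cc s.1 s.2 • f s.1) :=
          Fintype.sum_equiv e _ _ (fun l => rfl)
    _ = ∑ j, ∑ i, δY (pt j i) ⊗ₜ[ℝ] (cc j i • f j) := by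
          rw [← Finset.univ_sigma_univ, Finset.sum_sigma]
    _ = ∑ j, (∑ i, cc j i • δY (pt j i)) ⊗ₜ[ℝ] f j := by
          refine Finset.sum_congr rfl fun j _ => ?_
          rw [TensorProduct.sum_tmul]
          exact Finset.sum_congr rfl fun i _ => (TensorProduct.smul_tmul _ _ _).symm
    _ = ∑ j, n j ⊗ₜ[ℝ] f j := by
          exact Finset.sum_congr rfl fun j _ => by rw [hsum j]
  have hB : ∑ l, (fv l (δW (T (xv l))) - fv l (δW (T (yv l)))) = ∑ j, Ts (f j) (n j) := by
    have hWbase : δW (T (default : Y)) = 0 := by rw [hT0]; exact hFW.map_base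
    have hterm : ∀ l, fv l (δW (T (xv l))) - fv l (δW (T (yv l))) =
        cc (e l).1 (e l).2 * Ts (f (e l).1) (δY (pt (e l).1 (e l).2)) := by
      intro l
      rw [show yv l = default from rfl, hWbase, map_zero, sub_zero]
      show (cc (e l).1 (e l).2 • f (e l).1) (δW (T (xv l))) = _
      rw [ContinuousLinearMap.smul_apply, smul_eq_mul, ← hTs]
    calc ∑ l, (fv l (δW (T (xv l))) - fv l (δW (T (yv l))))
        = ∑ l, cc (e l).1 (e l).2 * Ts (f (e l).1) (δY (pt (e l).1 (e l).2)) :=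
          Finset.sum_congr rfl fun l _ => hterm l
    _ = ∑ s : (Σ j : Fin m, Fin (kk j)), cc s.1 s.2 * Ts (f s.1) (δY (pt s.1 s.2)) :=
          Fintype.sum_equiv e _ _ (fun l => rfl)
    _ = ∑ j, ∑ i, cc j i * Ts (f j) (δY (pt j i)) := by
          rw [← Finset.univ_sigma_univ, Finset.sum_sigma]
    _ = ∑ j, Ts (f j) (n j) := by
          refine Finset.sum_congr rfl fun j _ => ?_
          rw [← hsum j, map_sum]
          exact Finset.sum_congr rfl fun i _ => by rw [map_smul, smul_eq_mul]
  have hC : dpNorm p q (∑ j, n j ⊗ₜ[ℝ] f j) ≤ weakLp p n * strongLp q f := by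
    refine csInf_le ⟨0, ?_⟩ ⟨m, n, f, rfl, rfl⟩
    rintro r ⟨m', n', h', _, rfl⟩
    exact mul_nonneg (weakLp_nonneg hpq.nonneg n') (strongLp_nonneg q h')
  have H := hms k xv yv fv
  rw [hB, hA] at H
  calc |∑ j, Ts (f j) (n j)| ≤ K * dpNorm p q (∑ j, n j ⊗ₜ[ℝ] f j) := H
  _ ≤ K * (weakLp p n * strongLp q f) := mul_le_mul_of_nonneg_left hC hK.le

end StarB

noncomputable section DirB

open Real Finset NormedSpace

set_option maxHeartbeats 2000000 in
lemma dirB {Y W FY FW : Type*} [MetricSpace Y] [Inhabited Y] [MetricSpace W] [Inhabited W]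
    [NormedAddCommGroup FY] [NormedSpace ℝ FY] [CompleteSpace FY]
    [NormedAddCommGroup FW] [NormedSpace ℝ FW] [CompleteSpace FW]
    {δY : Y → FY} {δW : W → FW}
    (hFY : IsFreeSpace Y default FY δY) (hFW : IsFreeSpace W default FW δW)
    {p q : ℝ} (hpq : p.HolderConjugate q)
    (T : Y → W) (hT0 : T default = default)
    (Ts : StrongDual ℝ FW →L[ℝ] StrongDual ℝ FY)
    (hTs : ∀ (f : StrongDual ℝ FW) (x : Y), Ts f (δY x) = f (δW (T x))) :
    MSLipPSumming p q δY δW T → IsStronglyPSumming q p Ts := by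
  rintro ⟨K, hK, hms⟩
  have hstar := starB hFY hFW hpq T hT0 Ts hTs hK hms
  refine ⟨K, hK, fun m x φ => ?_⟩
  classical
  set S := strongLp q x with hSdef
  set M := weakLp p φ with hMdef
  have hS0 : 0 ≤ S := strongLp_nonneg q x
  have hM0 : 0 ≤ M := weakLp_nonneg hpq.nonneg φ
  set eps : Fin m → ℝ := fun j => if φ j (Ts (x j)) < 0 then -1 else 1 with heps
  have hepsabs : ∀ j, |eps j| = 1 := fun j => by
    simp only [heps]
    rcases lt_or_ge (φ j (Ts (x j))) 0 with h | h
    · rw [if_pos h]; norm_num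
    · rw [if_neg (not_lt.mpr h)]; exact abs_one
  set g : Fin m → StrongDual ℝ FY := fun j => Ts (eps j • x j) with hg
  have hgval : ∀ j, φ j (g j) = |φ j (Ts (x j))| := by
    intro j
    show φ j (Ts (eps j • x j)) = _
    rw [map_smul Ts, map_smul (φ j), smul_eq_mul]
    simp only [heps]
    rcases lt_or_ge (φ j (Ts (x j))) 0 with h | h
    · rw [if_pos h, abs_of_neg h]; ring_nf
    · rw [if_neg (not_lt.mpr h), abs_of_nonneg h]; ring_nf
  have hSg : strongLp q (fun j => eps j • x j) = S := by
    rw [hSdef]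
    unfold strongLp
    congr 1
    refine Finset.sum_congr rfl fun j _ => ?_
    rw [norm_smul, Real.norm_eq_abs, hepsabs j, one_mul]
  -- the main δ-quantified estimate
  have main : ∀ δ : ℝ, 0 < δ → δ < 1 → ∑ j, φ j (g j) ≤ M * (K * S / (1 - δ)) := by
    intro δ hδ0 hδ1
    have h1δ : 0 < 1 - δ := by linarith
    obtain ⟨N, hN1, hNnet⟩ := exists_net (m := m) hpq.symm.pos hδ0
    set ι := (Fin m) ⊕ {b // b ∈ N} with hι
    set a : ι → (Fin m → ℝ) := Sum.elim (fun j => Pi.single j 1) (fun z => (z : Fin m → ℝ))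
      with ha
    have haq : ∀ i, (∑ j, |a i j| ^ q) ^ (1 / q) ≤ 1 := by
      rintro (j | z)
      · have h2 : ∀ j' ∈ univ, |a (Sum.inl j) j'| ^ q = if j' = j then 1 else 0 := by
          intro j' _
          simp only [ha, Sum.elim_inl]
          rcases eq_or_ne j' j with rfl | h
          · rw [if_pos rfl, Pi.single_eq_same, abs_one, Real.one_rpow]
          · rw [if_neg h, Pi.single_eq_of_ne h, abs_zero, Real.zero_rpow hpq.symm.ne_zero]
        rw [Finset.sum_congr rfl h2, Finset.sum_ite_eq' univ j (fun _ => (1:ℝ)),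
          if_pos (Finset.mem_univ j), Real.one_rpow]
      · exact hN1 z z.2
    have hnet' : ∀ b : Fin m → ℝ, (∑ j, |b j| ^ q) ^ (1 / q) ≤ 1 →
        ∃ i : ι, (∑ j, |b j - a i j| ^ q) ^ (1 / q) ≤ δ := by
      intro b hb
      obtain ⟨a0, ha0N, ha0⟩ := hNnet b hb
      exact ⟨Sum.inr ⟨a0, ha0N⟩, ha0⟩
    set Φ : (Fin m → FY) →ₗ[ℝ] (ι → FY) :=
      LinearMap.pi (fun i => ∑ j, (a i j) • LinearMap.proj j) with hΦ
    have hΦapp : ∀ (n : Fin m → FY) (i : ι), Φ n i = ∑ j, a i j • n j := by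
      intro n i
      simp [hΦ, LinearMap.pi_apply]
    have hΦinl : ∀ (n : Fin m → FY) (j : Fin m), Φ n (Sum.inl j) = n j := by
      intro n j
      rw [hΦapp]
      have h2 : ∀ j' ∈ univ, a (Sum.inl j) j' • n j' = if j' = j then n j' else 0 := by
        intro j' _
        simp only [ha, Sum.elim_inl]
        rcases eq_or_ne j' j with rfl | h
        · rw [if_pos rfl, Pi.single_eq_same, one_smul]
        · rw [if_neg h, Pi.single_eq_of_ne h, zero_smul]
      rw [Finset.sum_congr rfl h2, Finset.sum_ite_eq' univ j (fun j' => n j'),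
        if_pos (Finset.mem_univ j)]
    set V := Submodule.span ℝ (Set.range δY) with hV
    have hdense : Dense (V : Set FY) :=
      Submodule.dense_iff_topologicalClosure_eq_top.mpr hFY.dense_span
    set VV : Submodule ℝ (Fin m → FY) := Submodule.pi Set.univ (fun _ => V) with hVV
    set R : Submodule ℝ (ι → FY) := VV.map Φ with hR
    set gg : (ι → FY) →L[ℝ] ℝ :=
      ∑ j, (g j).comp (ContinuousLinearMap.proj (Sum.inl j)) with hgg
    have hggapp : ∀ yv : ι → FY, gg yv = ∑ j, g j (yv (Sum.inl j)) := by
      intro yv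
      rw [hgg]
      simp [ContinuousLinearMap.sum_apply]
    have hweak : ∀ n : Fin m → FY, (1 - δ) * weakLp p n ≤ ‖Φ n‖ := by
      intro n
      have h1 : weakLp p n ≤ ‖Φ n‖ + δ * weakLp p n := by
        refine weakLp_le n (fun h hh => ?_)
        obtain ⟨b, hb1, hb2⟩ := exists_norming hpq (fun j => h (n j))
        obtain ⟨i, hi⟩ := hnet' b hb1
        have e1 : (∑ j, |h (n j)| ^ p) ^ (1 / p) = h (∑ j, b j • n j) := by
          rw [← hb2, map_sum]
          exact Finset.sum_congr rfl fun j _ => by rw [map_smul, smul_eq_mul]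
        have e2 : (∑ j, b j • n j) = Φ n i + ∑ j, (b j - a i j) • n j := by
          rw [hΦapp, ← Finset.sum_add_distrib]
          refine Finset.sum_congr rfl fun j _ => ?_
          rw [← add_smul]
          congr 1
          ring
        calc (∑ j, |h (n j)| ^ p) ^ (1 / p) = h (∑ j, b j • n j) := e1
        _ ≤ |h (∑ j, b j • n j)| := le_abs_self _
        _ ≤ ‖∑ j, b j • n j‖ := by
            rw [← Real.norm_eq_abs]
            calc ‖h (∑ j, b j • n j)‖ ≤ ‖h‖ * ‖∑ j, b j • n j‖ := h.le_opNorm _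
            _ ≤ 1 * ‖∑ j, b j • n j‖ := by gcongr
            _ = ‖∑ j, b j • n j‖ := one_mul _
        _ ≤ ‖Φ n i‖ + ‖∑ j, (b j - a i j) • n j‖ := by rw [e2]; exact norm_add_le _ _
        _ ≤ ‖Φ n‖ + δ * weakLp p n := by
            refine add_le_add (norm_le_pi_norm _ i) ?_
            calc ‖∑ j, (b j - a i j) • n j‖
                ≤ (∑ j, |b j - a i j| ^ q) ^ (1 / q) * weakLp p n :=
                  norm_combo_le_weakLp hpq _ n
            _ ≤ δ * weakLp p n :=
                  mul_le_mul_of_nonneg_right hi (weakLp_nonneg hpq.nonneg n)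
      linarith
    set C := K * S / (1 - δ) with hC
    have hC0 : 0 ≤ C := by
      rw [hC]
      positivity
    set f0 : R →L[ℝ] ℝ := gg.comp R.subtypeL with hf0
    have hf0app : ∀ r : R, f0 r = gg (r : ι → FY) := fun r => rfl
    have hf0norm : ‖f0‖ ≤ C := by
      refine ContinuousLinearMap.opNorm_le_bound _ hC0 (fun r => ?_)
      obtain ⟨n, hnVV, hn⟩ := r.2
      have hnV : ∀ j, n j ∈ V := fun j => hnVV j (Set.mem_univ j)
      have hval : f0 r = ∑ j, g j (n j) := by
        rw [hf0app, ← hn, hggapp]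
        exact Finset.sum_congr rfl fun j _ => by rw [hΦinl]
      have hineq := hstar m n hnV (fun j => eps j • x j)
      rw [hSg] at hineq
      have h3 : |f0 r| ≤ K * (weakLp p n * S) := by
        rw [hval]
        exact hineq
      have h4 : weakLp p n ≤ ‖(r : ι → FY)‖ / (1 - δ) := by
        rw [le_div_iff₀ h1δ, mul_comm, ← hn]
        exact hweak n
      calc ‖f0 r‖ = |f0 r| := Real.norm_eq_abs _
      _ ≤ K * (weakLp p n * S) := h3
      _ = K * S * weakLp p n := by ring
      _ ≤ K * S * (‖(r : ι → FY)‖ / (1 - δ)) := by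
          refine mul_le_mul_of_nonneg_left h4 (by positivity)
      _ = C * ‖(r : ι → FY)‖ := by rw [hC]; ring
      _ = C * ‖r‖ := rfl
    obtain ⟨η, hη1, hη2⟩ := exists_extension_norm_eq R f0
    have hηnorm : ‖η‖ ≤ C := by rw [hη2]; exact hf0norm
    set hfn : ι → StrongDual ℝ FY := fun i => η.comp (singleCLM ι FY i) with hhfn
    have hdecomp : ∀ yv : ι → FY, η yv = ∑ i, hfn i (yv i) := by
      intro yv
      conv_lhs => rw [← pi_sum_single yv]
      rw [map_sum]
      exact Finset.sum_congr rfl fun i _ => (congrArg η (singleCLM_apply i (yv i))).symm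
    have hsumnorm : ∑ i, ‖hfn i‖ ≤ ‖η‖ := by
      refine le_of_forall_pos_le_add (fun ε hε => ?_)
      set cι : ℝ := (Fintype.card ι : ℝ) with hcι
      have hcι0 : 0 ≤ cι := by positivity
      set ε' : ℝ := ε / (cι + 1) with hε'def
      have hε' : 0 < ε' := by
        rw [hε'def]
        positivity
      have hchoice : ∀ i : ι, ∃ v : FY, ‖v‖ ≤ 1 ∧ ‖hfn i‖ - ε' ≤ hfn i v := by
        intro i
        rcases lt_or_ge (‖hfn i‖ - ε') 0 with h | h
        · exact ⟨0, by simp, by simpa using h.le⟩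
        · have h2 : ‖hfn i‖ - ε' < ‖hfn i‖ := by linarith
          obtain ⟨v, hv1, hv2⟩ := (hfn i).exists_lt_apply_of_lt_opNorm h2
          rcases le_or_gt 0 (hfn i v) with hs | hs
          · refine ⟨v, hv1.le, ?_⟩
            rw [Real.norm_eq_abs, abs_of_nonneg hs] at hv2
            linarith
          · refine ⟨-v, by simpa using hv1.le, ?_⟩
            rw [map_neg]
            rw [Real.norm_eq_abs, abs_of_neg hs] at hv2
            linarith
      choose v hv1 hv2 using hchoice
      have h5 : ∑ i, (‖hfn i‖ - ε') ≤ η (fun i => v i) := by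
        rw [hdecomp]
        exact Finset.sum_le_sum fun i _ => hv2 i
      have h6 : η (fun i => v i) ≤ ‖η‖ := by
        calc η (fun i => v i) ≤ |η (fun i => v i)| := le_abs_self _
        _ ≤ ‖η‖ * ‖fun i => v i‖ := by
            rw [← Real.norm_eq_abs]
            exact η.le_opNorm _
        _ ≤ ‖η‖ * 1 := by
            refine mul_le_mul_of_nonneg_left ?_ (norm_nonneg _)
            exact (pi_norm_le_iff_of_nonneg zero_le_one).mpr hv1
        _ = ‖η‖ := mul_one _
      have h7 : ∑ i, (‖hfn i‖ - ε') = (∑ i, ‖hfn i‖) - cι * ε' := by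
        rw [Finset.sum_sub_distrib, Finset.sum_const, card_univ, nsmul_eq_mul, hcι]
      have h8 : cι * ε' ≤ ε := by
        rw [hε'def]
        rw [mul_div_assoc] at *
        calc cι * (ε / (cι + 1)) ≤ (cι + 1) * (ε / (cι + 1)) := by
              refine mul_le_mul_of_nonneg_right (by linarith) (by positivity)
        _ = ε := by field_simp
      linarith
    have hrepr : ∀ j, g j = ∑ i, a i j • hfn i := by
      intro j
      have heqOn : ∀ w ∈ (V : Set FY), g j w = (∑ i, a i j • hfn i) w := by
        intro w hw
        have hmem : (Pi.single j w : Fin m → FY) ∈ VV := by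
          rw [hVV]
          refine Submodule.mem_pi.mpr fun j' _ => ?_
          rcases eq_or_ne j' j with rfl | h
          · rw [Pi.single_eq_same]; exact hw
          · rw [Pi.single_eq_of_ne h]; exact V.zero_mem
        have hmem2 : Φ (Pi.single j w) ∈ R := Submodule.mem_map_of_mem hmem
        have h9 : η (Φ (Pi.single j w)) = f0 ⟨Φ (Pi.single j w), hmem2⟩ := hη1 ⟨_, hmem2⟩
        have h10 : f0 ⟨Φ (Pi.single j w), hmem2⟩ = g j w := by
          rw [hf0app, hggapp]
          have h11 : ∀ j' ∈ univ, g j' (Φ (Pi.single j w) (Sum.inl j')) =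
              if j' = j then g j w else 0 := by
            intro j' _
            rw [hΦinl]
            rcases eq_or_ne j' j with rfl | h
            · rw [if_pos rfl, Pi.single_eq_same]
            · rw [Pi.single_eq_of_ne h, map_zero, if_neg h]
          rw [Finset.sum_congr rfl h11, Finset.sum_ite_eq' univ j (fun _ => g j w),
            if_pos (Finset.mem_univ j)]
        have h12 : η (Φ (Pi.single j w)) = ∑ i, a i j * hfn i w := by
          rw [hdecomp]
          refine Finset.sum_congr rfl fun i _ => ?_
          rw [hΦapp]
          have h13 : ∀ j' ∈ univ, a i j' • (Pi.single j w : Fin m → FY) j' =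
              if j' = j then a i j • w else 0 := by
            intro j' _
            rcases eq_or_ne j' j with rfl | h
            · rw [if_pos rfl, Pi.single_eq_same]
            · rw [Pi.single_eq_of_ne h, smul_zero, if_neg h]
          rw [Finset.sum_congr rfl h13, Finset.sum_ite_eq' univ j (fun _ => a i j • w),
            if_pos (Finset.mem_univ j), map_smul, smul_eq_mul]
        have h14 : (∑ i, a i j • hfn i) w = ∑ i, a i j * hfn i w := by
          rw [ContinuousLinearMap.sum_apply]
          exact Finset.sum_congr rfl fun i _ => by
            rw [ContinuousLinearMap.smul_apply, smul_eq_mul]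
        rw [h14, ← h12, h9, h10]
      have hfuneq : ⇑(g j) = ⇑(∑ i, a i j • hfn i) :=
        Continuous.ext_on hdense (g j).continuous (∑ i, a i j • hfn i).continuous heqOn
      exact ContinuousLinearMap.ext fun w => congrFun hfuneq w
    set Φi : ι → StrongDual ℝ (StrongDual ℝ FY) := fun i => ∑ j, a i j • φ j with hΦi
    have hΦiM : ∀ i, ‖Φi i‖ ≤ M := by
      intro i
      calc ‖Φi i‖ ≤ (∑ j, |a i j| ^ q) ^ (1 / q) * weakLp p φ :=
            norm_combo_le_weakLp hpq _ φ
      _ ≤ 1 * M := mul_le_mul_of_nonneg_right (haq i) hM0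
      _ = M := one_mul M
    have e1 : ∑ j, φ j (g j) = ∑ i, Φi i (hfn i) := by
      calc ∑ j, φ j (g j) = ∑ j, ∑ i, a i j * φ j (hfn i) := by
            refine Finset.sum_congr rfl fun j _ => ?_
            rw [hrepr j, map_sum]
            exact Finset.sum_congr rfl fun i _ => by rw [map_smul, smul_eq_mul]
      _ = ∑ i, ∑ j, a i j * φ j (hfn i) := Finset.sum_comm
      _ = ∑ i, Φi i (hfn i) := by
            refine Finset.sum_congr rfl fun i _ => ?_
            rw [hΦi, ContinuousLinearMap.sum_apply]
            exact (Finset.sum_congr rfl fun j _ => by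
              rw [ContinuousLinearMap.smul_apply, smul_eq_mul]).symm
    rw [e1]
    calc ∑ i, Φi i (hfn i) ≤ ∑ i, M * ‖hfn i‖ := by
          refine Finset.sum_le_sum fun i _ => ?_
          calc Φi i (hfn i) ≤ |Φi i (hfn i)| := le_abs_self _
          _ ≤ ‖Φi i‖ * ‖hfn i‖ := by
              rw [← Real.norm_eq_abs]
              exact (Φi i).le_opNorm _
          _ ≤ M * ‖hfn i‖ := mul_le_mul_of_nonneg_right (hΦiM i) (norm_nonneg _)
    _ = M * ∑ i, ‖hfn i‖ := by rw [Finset.mul_sum]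
    _ ≤ M * ‖η‖ := mul_le_mul_of_nonneg_left hsumnorm hM0
    _ ≤ M * C := mul_le_mul_of_nonneg_left hηnorm hM0
    _ = M * (K * S / (1 - δ)) := by rw [hC]
  -- conclude
  have hLHS : ∑ j, |φ j (Ts (x j))| = ∑ j, φ j (g j) :=
    (Finset.sum_congr rfl fun j _ => (hgval j)).symm
  rw [hLHS, show K * strongLp q x * weakLp p φ = K * S * M from rfl]
  set L := ∑ j, φ j (g j) with hL
  have hL0 : 0 ≤ L := by
    rw [hL]
    exact Finset.sum_nonneg fun j _ => by rw [hgval j]; exact abs_nonneg _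
  by_contra hcon
  push_neg at hcon
  have hB0 : 0 ≤ K * S * M := by positivity
  have hLpos : 0 < L := lt_of_le_of_lt hB0 hcon
  set δ₀ : ℝ := (L - K * S * M) / (2 * L) with hδ₀
  have hδ₀pos : 0 < δ₀ := div_pos (by linarith) (by linarith)
  have hδ₀lt : δ₀ < 1 := by
    rw [hδ₀, div_lt_one (by linarith)]
    linarith
  have hmain := main δ₀ hδ₀pos hδ₀lt
  have hh : M * (K * S / (1 - δ₀)) = K * S * M / (1 - δ₀) := by ring
  rw [hh, le_div_iff₀ (by linarith)] at hmain
  -- L * (1 - δ₀) ≤ K*S*M, i.e. L - L δ₀ ≤ KSM; L δ₀ = (L - KSM)/2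
  have hLδ : L * δ₀ = (L - K * S * M) / 2 := by
    rw [hδ₀]
    field_simp
  nlinarith [hmain, hLδ]

end DirB

/-- Corollary 2.6: `T` is MS-Lipschitz `p`-summing iff the Lipschitz adjoint
`T^# : W^# → Y^#` is strongly `p*`-summing.  Here `W^#`, `Y^#` are realized as the duals of the
free spaces and `T^#` as the adjoint `Ts` of the linearization. -/
theorem msLipPSumming_iff_adjoint_stronglySumming
    {Y W FY FW : Type*} [MetricSpace Y] [Inhabited Y] [MetricSpace W] [Inhabited W]
    [NormedAddCommGroup FY] [NormedSpace ℝ FY] [CompleteSpace FY]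
    [NormedAddCommGroup FW] [NormedSpace ℝ FW] [CompleteSpace FW]
    {δY : Y → FY} {δW : W → FW}
    (hFY : IsFreeSpace Y default FY δY) (hFW : IsFreeSpace W default FW δW)
    {p q : ℝ} (hpq : p.HolderConjugate q)
    (T : Y → W) (hTlip : ∃ K, LipschitzWith K T) (hT0 : T default = default)
    (Ts : StrongDual ℝ FW →L[ℝ] StrongDual ℝ FY)
    (hTs : ∀ (f : StrongDual ℝ FW) (x : Y), Ts f (δY x) = f (δW (T x))) :
    MSLipPSumming p q δY δW T ↔ IsStronglyPSumming q p Ts := by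
  constructor
  · exact dirB hFY hFW hpq T hT0 Ts hTs
  · exact dirA hpq T Ts hTs
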